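/- Let (x₁,x₂,x₃) → (x̄₁, x̄₂, x̄₃) be a convergent sequence in A with limit on the boundary ∂A satisfying e^{x̄₁} = e^{x̄₂} + e^{x̄₃}. Then the angles of the triangle with sides (e^{x₁}, e^{x₂}, e^{x₃}) converge: (α₁, α₂, α₃) → (π, 0, 0), and consequently f(x₁,x₂,x₃) → π·x̄₁. -/

import Mathlib

open Real

/-- Milnor's Lobachevsky function Л(α) = −∫₀^α log|2 sin t| dt. -/
noncomputable def Lob (α : ℝ) : ℝ := -∫ t in (0:ℝ)..α, Real.log (2 * Real.sin t)

/-- The domain A where the triangle inequalities hold for (e^{x₁}, e^{x₂}, e^{x₃}). -/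
def triA : Set (ℝ × ℝ × ℝ) :=
  {x | Real.exp x.1 < Real.exp x.2.1 + Real.exp x.2.2 ∧
       Real.exp x.2.1 < Real.exp x.2.2 + Real.exp x.1 ∧
       Real.exp x.2.2 < Real.exp x.1 + Real.exp x.2.1}

/-- The angle opposite the side of length e^{x₁} (law of cosines). -/
noncomputable def ang1 (x : ℝ × ℝ × ℝ) : ℝ :=
  Real.arccos ((Real.exp (2*x.2.1) + Real.exp (2*x.2.2) - Real.exp (2*x.1)) /
    (2 * Real.exp x.2.1 * Real.exp x.2.2))

/-- The angle opposite the side of length e^{x₂}. -/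
noncomputable def ang2 (x : ℝ × ℝ × ℝ) : ℝ :=
  Real.arccos ((Real.exp (2*x.2.2) + Real.exp (2*x.1) - Real.exp (2*x.2.1)) /
    (2 * Real.exp x.2.2 * Real.exp x.1))

/-- The angle opposite the side of length e^{x₃}. -/
noncomputable def ang3 (x : ℝ × ℝ × ℝ) : ℝ :=
  Real.arccos ((Real.exp (2*x.1) + Real.exp (2*x.2.1) - Real.exp (2*x.2.2)) /
    (2 * Real.exp x.1 * Real.exp x.2.1))

/-- The triangle function f(x₁,x₂,x₃) = Σ αᵢxᵢ + Σ Л(αᵢ). -/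
noncomputable def fTri (x : ℝ × ℝ × ℝ) : ℝ :=
  ang1 x * x.1 + ang2 x * x.2.1 + ang3 x * x.2.2 +
    Lob (ang1 x) + Lob (ang2 x) + Lob (ang3 x)

section MyAux
open Real MeasureTheory Set intervalIntegral

lemma myIntLog01 : IntervalIntegrable Real.log volume 0 1 := by
  have hcont : ContinuousOn (fun x : ℝ => x - x * Real.log x) (Icc 0 1) :=
    (continuous_id.sub Real.continuous_mul_log).continuousOn
  have hderiv : ∀ x ∈ Ioo (0:ℝ) 1,
      HasDerivAt (fun x : ℝ => x - x * Real.log x) (-Real.log x) x := by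
    intro x hx
    have h := (hasDerivAt_id x).sub (Real.hasDerivAt_mul_log hx.1.ne')
    exact h.congr_deriv (by ring)
  have hpos : ∀ x ∈ Ioo (0:ℝ) 1, 0 ≤ -Real.log x := by
    intro x hx
    simpa using Real.log_nonpos hx.1.le hx.2.le
  have := integrableOn_deriv_of_nonneg hcont hderiv hpos
  rw [intervalIntegrable_iff, uIoc_of_le (zero_le_one)]
  exact (this.neg.congr (Filter.Eventually.of_forall fun x => by simp))

lemma myIntLogC {c : ℝ} (hc : 1 ≤ c) : IntervalIntegrable Real.log volume 0 c :=
  myIntLog01.trans (intervalIntegrable_log (by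
    rw [Set.uIcc_of_le hc]; intro h; exact absurd h.1 (by norm_num)))

lemma myIntLogSinHalf : IntervalIntegrable (fun t => Real.log (Real.sin t)) volume 0 (π/2) := by
  have hpi : (1:ℝ) ≤ π/2 := by nlinarith [pi_gt_three]
  rw [intervalIntegrable_iff, uIoc_of_le (by linarith : (0:ℝ) ≤ π/2)]
  have hbound : IntegrableOn (fun x : ℝ => Real.log (π/2) - Real.log x) (Ioc 0 (π/2)) volume := by
    apply Integrable.sub (integrableOn_const (C := Real.log (π/2)) measure_Ioc_lt_top.ne)
    have := myIntLogC hpi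
    rw [intervalIntegrable_iff, uIoc_of_le (by linarith : (0:ℝ) ≤ π/2)] at this
    exact this
  apply Integrable.mono' hbound
  · exact ((Real.measurable_log.comp Real.measurable_sin).aestronglyMeasurable)
  · rw [ae_restrict_iff' measurableSet_Ioc]
    filter_upwards with t ht
    have hs : 0 < Real.sin t := Real.sin_pos_of_pos_of_lt_pi ht.1 (by have := ht.2; linarith [pi_pos])
    have hs1 : Real.sin t ≤ 1 := Real.sin_le_one t
    rw [Real.norm_eq_abs, abs_of_nonpos (Real.log_nonpos hs.le hs1)]
    have h2 : 2/π * t ≤ Real.sin t := Real.mul_le_sin ht.1.le ht.2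
    have h3 : Real.log (2/π * t) ≤ Real.log (Real.sin t) :=
      Real.log_le_log (by have := ht.1; positivity) h2
    have h4 : Real.log (2/π * t) = Real.log t - Real.log (π/2) := by
      rw [Real.log_mul (by positivity) ht.1.ne', Real.log_div two_ne_zero pi_ne_zero,
        Real.log_div pi_ne_zero two_ne_zero]
      ring
    linarith

lemma myIntLogSinHalf2 : IntervalIntegrable (fun t => Real.log (Real.sin t)) volume (π/2) π := by
  have h := (myIntLogSinHalf.comp_sub_left π)
  have he : (fun x => Real.log (Real.sin (π - x))) = fun x => Real.log (Real.sin x) :=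
    funext fun x => by rw [Real.sin_pi_sub]
  rw [he] at h
  have h2 : π - 0 = π := by ring
  have h3 : π - π/2 = π/2 := by ring
  rw [h2, h3] at h
  exact h.symm

lemma myIntLogSinPi : IntervalIntegrable (fun t => Real.log (Real.sin t)) volume 0 π :=
  myIntLogSinHalf.trans myIntLogSinHalf2

lemma myIntLogCosHalf : IntervalIntegrable (fun t => Real.log (Real.cos t)) volume 0 (π/2) := by
  have h := (myIntLogSinHalf.comp_sub_left (π/2))
  have he : (fun x => Real.log (Real.sin (π/2 - x))) = fun x => Real.log (Real.cos x) :=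
    funext fun x => by rw [Real.sin_pi_div_two_sub]
  rw [he] at h
  have h2 : π/2 - 0 = π/2 := by ring
  have h3 : π/2 - π/2 = 0 := by ring
  rw [h2, h3] at h
  exact h.symm

lemma myIntegralLogSin : ∫ t in (0:ℝ)..π, Real.log (Real.sin t) = -(π * Real.log 2) := by
  set I := ∫ t in (0:ℝ)..π, Real.log (Real.sin t) with hI
  set J := ∫ t in (0:ℝ)..(π/2), Real.log (Real.sin t) with hJ
  -- second half equals J
  have hsecond : (∫ t in (π/2:ℝ)..π, Real.log (Real.sin t)) = J := by
    have h := integral_comp_sub_left (a := 0) (b := π/2) (fun t => Real.log (Real.sin t)) π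
    have h2 : π - 0 = π := by ring
    have h3 : π - π/2 = π/2 := by ring
    rw [h2, h3] at h
    rw [← h, hJ]
    congr 1
    funext t
    rw [Real.sin_pi_sub]
  have hsplit : J + J = I := by
    have h := integral_add_adjacent_intervals myIntLogSinHalf myIntLogSinHalf2
    rw [hsecond] at h
    exact h
  -- log cos integral equals J
  have hcos : (∫ t in (0:ℝ)..(π/2), Real.log (Real.cos t)) = J := by
    have h := integral_comp_sub_left (a := 0) (b := π/2) (fun t => Real.log (Real.sin t)) (π/2)
    have h2 : π/2 - 0 = π/2 := by ring
    have h3 : π/2 - π/2 = 0 := by ring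
    rw [h2, h3] at h
    rw [hJ, ← h]
    congr 1
    funext t
    rw [Real.sin_pi_div_two_sub]
  -- sum of log sin and log cos
  have hadd : (∫ t in (0:ℝ)..(π/2), (Real.log (Real.sin t) + Real.log (Real.cos t))) = J + J := by
    rw [integral_add myIntLogSinHalf myIntLogCosHalf, hcos, hJ]
  -- a.e. equality with log sin (2 t) - log 2
  have hae : (∫ t in (0:ℝ)..(π/2), (Real.log (Real.sin t) + Real.log (Real.cos t))) =
      ∫ t in (0:ℝ)..(π/2), (Real.log (Real.sin (2*t)) - Real.log 2) := by
    apply intervalIntegral.integral_congr_ae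
    have hne : ∀ᵐ t : ℝ, t ≠ π/2 := by
      have : (volume : Measure ℝ) {π/2} = 0 := measure_singleton _
      filter_upwards [measure_eq_zero_iff_ae_notMem.mp this] with t ht using ht
    filter_upwards [hne] with t ht hmem
    rw [uIoc_of_le (by positivity : (0:ℝ) ≤ π/2)] at hmem
    have ht1 : 0 < t := hmem.1
    have ht2 : t < π/2 := lt_of_le_of_ne hmem.2 ht
    have hs : 0 < Real.sin t := Real.sin_pos_of_pos_of_lt_pi ht1 (by linarith [pi_pos])
    have hc : 0 < Real.cos t := Real.cos_pos_of_mem_Ioo ⟨by linarith [pi_pos], ht2⟩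
    rw [Real.sin_two_mul, Real.log_mul (by positivity) hc.ne',
      Real.log_mul two_ne_zero hs.ne']
    ring
  -- substitution 2t
  have hsub : (∫ t in (0:ℝ)..(π/2), Real.log (Real.sin (2*t))) = I/2 := by
    have h := integral_comp_mul_left (a := 0) (b := π/2) (fun t => Real.log (Real.sin t))
      (c := 2) two_ne_zero
    rw [h]
    norm_num [hI]
    ring
  have hconst : (∫ t in (0:ℝ)..(π/2), (Real.log (Real.sin (2*t)) - Real.log 2)) =
      I/2 - π/2 * Real.log 2 := by
    rw [integral_sub _ intervalIntegrable_const, hsub, intervalIntegral.integral_const]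
    · norm_num
    · have h := myIntLogSinPi.comp_mul_left (c := 2)
      norm_num at h
      exact h
  have : J + J = I/2 - π/2 * Real.log 2 := by rw [← hadd, hae, hconst]
  linarith [hsplit, this]

lemma myAE2Sin : (fun t => Real.log 2 + Real.log (Real.sin t))
    =ᵐ[volume.restrict (Set.Ioc (0:ℝ) π)] (fun t => Real.log (2 * Real.sin t)) := by
  have hne : ∀ᵐ t : ℝ ∂(volume.restrict (Set.Ioc (0:ℝ) π)), t ≠ π := by
    refine ae_restrict_of_ae ?_
    have : (volume : Measure ℝ) {π} = 0 := measure_singleton _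
    filter_upwards [measure_eq_zero_iff_ae_notMem.mp this] with t ht using ht
  filter_upwards [hne, ae_restrict_mem measurableSet_Ioc] with t ht hmem
  have hs : 0 < Real.sin t := Real.sin_pos_of_pos_of_lt_pi hmem.1 (lt_of_le_of_ne hmem.2 ht)
  rw [Real.log_mul two_ne_zero hs.ne']

lemma myIntLog2Sin : IntervalIntegrable (fun t => Real.log (2 * Real.sin t)) volume 0 π := by
  have h : IntervalIntegrable (fun t => Real.log 2 + Real.log (Real.sin t)) volume 0 π :=
    intervalIntegrable_const.add myIntLogSinPi
  rw [intervalIntegrable_iff, uIoc_of_le pi_pos.le] at h ⊢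
  exact h.congr myAE2Sin

lemma myIntegralLog2Sin : ∫ t in (0:ℝ)..π, Real.log (2 * Real.sin t) = 0 := by
  have hcg : ∫ t in (0:ℝ)..π, Real.log (2 * Real.sin t) =
      ∫ t in (0:ℝ)..π, (Real.log 2 + Real.log (Real.sin t)) := by
    rw [intervalIntegral.integral_of_le pi_pos.le, intervalIntegral.integral_of_le pi_pos.le]
    exact (MeasureTheory.integral_congr_ae myAE2Sin).symm
  rw [hcg, integral_add intervalIntegrable_const myIntLogSinPi, myIntegralLogSin,
    intervalIntegral.integral_const]
  simp [mul_comm]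

end MyAux

open Filter

section MyAux2
open MeasureTheory
lemma myLobPi : Lob π = 0 := by simp [Lob, myIntegralLog2Sin]

lemma myLobZero : Lob 0 = 0 := by simp [Lob]

lemma myLobCont : ContinuousOn Lob (Set.Icc 0 π) := by
  have h := (intervalIntegral.continuousOn_primitive_interval' myIntLog2Sin
    Set.left_mem_uIcc).neg
  rwa [Set.uIcc_of_le pi_pos.le] at h
end MyAux2

/-- Limit (b) in the proof of Lemma 6.9: as (x₁,x₂,x₃) → (x̄₁,x̄₂,x̄₃) ∈ ∂A
with e^{x̄₁} = e^{x̄₂} + e^{x̄₃}, the angles tend to (π,0,0) and f → π x̄₁. -/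
theorem fTri_boundary_limit (x : ℕ → ℝ × ℝ × ℝ) (xb : ℝ × ℝ × ℝ)
    (hA : ∀ n, x n ∈ triA)
    (hlim : Tendsto x atTop (nhds xb))
    (hbd : Real.exp xb.1 = Real.exp xb.2.1 + Real.exp xb.2.2) :
    Tendsto (fun n => ang1 (x n)) atTop (nhds Real.pi) ∧
    Tendsto (fun n => ang2 (x n)) atTop (nhds 0) ∧
    Tendsto (fun n => ang3 (x n)) atTop (nhds 0) ∧
    Tendsto (fun n => fTri (x n)) atTop (nhds (Real.pi * xb.1)) := by
  have e2 : ∀ y : ℝ, Real.exp (2*y) = Real.exp y * Real.exp y := fun y => by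
    rw [two_mul, Real.exp_add]
  have hb : 0 < Real.exp xb.2.1 := Real.exp_pos _
  have hc : 0 < Real.exp xb.2.2 := Real.exp_pos _
  have hv1 : ang1 xb = π := by
    unfold ang1
    rw [e2, e2, e2, hbd]
    have h : (Real.exp xb.2.1 * Real.exp xb.2.1 + Real.exp xb.2.2 * Real.exp xb.2.2 -
        (Real.exp xb.2.1 + Real.exp xb.2.2) * (Real.exp xb.2.1 + Real.exp xb.2.2)) /
        (2 * Real.exp xb.2.1 * Real.exp xb.2.2) = -1 := by
      field_simp; ring
    rw [h, Real.arccos_neg_one]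
  have hv2 : ang2 xb = 0 := by
    unfold ang2
    rw [e2, e2, e2, hbd]
    have h : (Real.exp xb.2.2 * Real.exp xb.2.2 +
        (Real.exp xb.2.1 + Real.exp xb.2.2) * (Real.exp xb.2.1 + Real.exp xb.2.2) -
        Real.exp xb.2.1 * Real.exp xb.2.1) /
        (2 * Real.exp xb.2.2 * (Real.exp xb.2.1 + Real.exp xb.2.2)) = 1 := by
      field_simp; ring
    rw [h, Real.arccos_one]
  have hv3 : ang3 xb = 0 := by
    unfold ang3
    rw [e2, e2, e2, hbd]
    have h : ((Real.exp xb.2.1 + Real.exp xb.2.2) * (Real.exp xb.2.1 + Real.exp xb.2.2) +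
        Real.exp xb.2.1 * Real.exp xb.2.1 - Real.exp xb.2.2 * Real.exp xb.2.2) /
        (2 * (Real.exp xb.2.1 + Real.exp xb.2.2) * Real.exp xb.2.1) = 1 := by
      field_simp; ring
    rw [h, Real.arccos_one]
  have c1 : Continuous ang1 := by
    unfold ang1
    exact Real.continuous_arccos.comp (Continuous.div (by fun_prop) (by fun_prop)
      (fun y => by positivity))
  have c2 : Continuous ang2 := by
    unfold ang2
    exact Real.continuous_arccos.comp (Continuous.div (by fun_prop) (by fun_prop)
      (fun y => by positivity))
  have c3 : Continuous ang3 := by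
    unfold ang3
    exact Real.continuous_arccos.comp (Continuous.div (by fun_prop) (by fun_prop)
      (fun y => by positivity))
  have t1 : Tendsto (fun n => ang1 (x n)) atTop (nhds π) := by
    have := (c1.tendsto xb).comp hlim; rwa [hv1] at this
  have t2 : Tendsto (fun n => ang2 (x n)) atTop (nhds 0) := by
    have := (c2.tendsto xb).comp hlim; rwa [hv2] at this
  have t3 : Tendsto (fun n => ang3 (x n)) atTop (nhds 0) := by
    have := (c3.tendsto xb).comp hlim; rwa [hv3] at this
  refine ⟨t1, t2, t3, ?_⟩
  have L : ∀ (a : ℝ × ℝ × ℝ → ℝ) (v : ℝ), (∀ y, a y ∈ Set.Icc 0 π) → v ∈ Set.Icc 0 π →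
      Tendsto (fun n => a (x n)) atTop (nhds v) →
      Tendsto (fun n => Lob (a (x n))) atTop (nhds (Lob v)) := by
    intro a v hmem hv ht
    exact (myLobCont v hv).tendsto.comp
      (tendsto_nhdsWithin_iff.mpr ⟨ht, Eventually.of_forall fun n => hmem _⟩)
  have hm1 : ∀ y, ang1 y ∈ Set.Icc 0 π := fun y => ⟨Real.arccos_nonneg _, Real.arccos_le_pi _⟩
  have hm2 : ∀ y, ang2 y ∈ Set.Icc 0 π := fun y => ⟨Real.arccos_nonneg _, Real.arccos_le_pi _⟩
  have hm3 : ∀ y, ang3 y ∈ Set.Icc 0 π := fun y => ⟨Real.arccos_nonneg _, Real.arccos_le_pi _⟩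
  have hl1 := L ang1 π hm1 ⟨pi_pos.le, le_refl π⟩ t1
  have hl2 := L ang2 0 hm2 ⟨le_refl 0, pi_pos.le⟩ t2
  have hl3 := L ang3 0 hm3 ⟨le_refl 0, pi_pos.le⟩ t3
  have hx1 : Tendsto (fun n => (x n).1) atTop (nhds xb.1) :=
    (continuous_fst.tendsto xb).comp hlim
  have hx2 : Tendsto (fun n => (x n).2.1) atTop (nhds xb.2.1) :=
    ((continuous_fst.comp continuous_snd).tendsto xb).comp hlim
  have hx3 : Tendsto (fun n => (x n).2.2) atTop (nhds xb.2.2) :=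
    ((continuous_snd.comp continuous_snd).tendsto xb).comp hlim
  have final := (((((t1.mul hx1).add (t2.mul hx2)).add (t3.mul hx3)).add hl1).add hl2).add hl3
  have hval : π * xb.1 + 0 * xb.2.1 + 0 * xb.2.2 + Lob π + Lob 0 + Lob 0 = π * xb.1 := by
    rw [myLobPi, myLobZero]; ring
  rw [← hval]
  exact final
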